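/- Every connected P4-free graph on at least 2 vertices has edge-connectivity equal to its minimum degree. -/

import Mathlib

open SimpleGraph

/-- The edge-connectivity of `G`: the minimum number of edges whose deletion disconnects `G`. -/
noncomputable def edgeConn {V : Type*} [Fintype V] (G : SimpleGraph V) : ℕ :=
  sInf {k | ∃ F : Finset (Sym2 V), ↑F ⊆ G.edgeSet ∧ F.card = k ∧ ¬ (G.deleteEdges ↑F).Connected}

/-- The minimum degree of `G`. -/
noncomputable def minDeg {V : Type*} [Fintype V] (G : SimpleGraph V) : ℕ :=
  sInf {d | ∃ v : V, d = (G.neighborSet v).ncard}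

/-- If there is a geodesic of length at least 3, then `G` contains an induced `P₄`. -/
lemma p4_aux {V : Type*} (G : SimpleGraph V) {a b c d t : V}
    (hab : G.Adj a b) (hbc : G.Adj b c) (hcd : G.Adj c d) (q : G.Walk d t)
    (hmin : G.dist a t = q.length + 3) : Nonempty (pathGraph 4 ↪g G) := by
  have hac : ¬ G.Adj a c := by
    intro h
    have := SimpleGraph.dist_le (SimpleGraph.Walk.cons h (SimpleGraph.Walk.cons hcd q))
    simp only [SimpleGraph.Walk.length_cons] at this
    omega
  have hbd : ¬ G.Adj b d := by
    intro h
    have := SimpleGraph.dist_le (SimpleGraph.Walk.cons hab (SimpleGraph.Walk.cons h q))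
    simp only [SimpleGraph.Walk.length_cons] at this
    omega
  have had : ¬ G.Adj a d := by
    intro h
    have := SimpleGraph.dist_le (SimpleGraph.Walk.cons h q)
    simp only [SimpleGraph.Walk.length_cons] at this
    omega
  have hnab : a ≠ b := hab.ne
  have hnbc : b ≠ c := hbc.ne
  have hncd : c ≠ d := hcd.ne
  have hnac : a ≠ c := by rintro rfl; exact had hcd
  have hnbd : b ≠ d := by rintro rfl; exact had hab
  have hnad : a ≠ d := by
    rintro rfl
    have := SimpleGraph.dist_le q
    omega
  have hca : ¬ G.Adj c a := fun h => hac h.symm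
  have hdb : ¬ G.Adj d b := fun h => hbd h.symm
  have hda : ¬ G.Adj d a := fun h => had h.symm
  have hba := hab.symm
  have hcb := hbc.symm
  have hdc := hcd.symm
  refine ⟨⟨⟨![a, b, c, d], ?_⟩, ?_⟩⟩
  · intro i j hij
    fin_cases i <;> fin_cases j <;> simp_all
  · intro i j
    fin_cases i <;> fin_cases j <;>
      simp [pathGraph_adj, hab, hbc, hcd, hac, hbd, had, hba, hcb, hdc, hca, hdb, hda, G.irrefl] <;>
      assumption

/-- Counting lemma: if every vertex of `S` has a neighbour outside `S`, and all edges leaving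
`S` lie in `F`, then `F` has at least as many edges as the degree of any vertex of `S`. -/
lemma count_aux {V : Type*} [Fintype V] (G : SimpleGraph V) (S : Set V)
    (F : Finset (Sym2 V)) (hcut : ∀ x ∈ S, ∀ y, y ∉ S → G.Adj x y → s(x, y) ∈ F)
    (hall : ∀ x ∈ S, ∃ y, y ∉ S ∧ G.Adj x y) {s : V} (hs : s ∈ S) :
    (G.neighborSet s).ncard ≤ F.card := by
  classical
  have hgex : ∀ x : V, ∃ y : V, x ∈ S → (y ∉ S ∧ G.Adj x y) := by
    intro x
    by_cases hx : x ∈ S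
    · obtain ⟨y, hy⟩ := hall x hx
      exact ⟨y, fun _ => hy⟩
    · exact ⟨x, fun h => absurd h hx⟩
  choose g hgspec using hgex
  have hg1 : ∀ x ∈ S, g x ∉ S := fun x hx => (hgspec x hx).1
  have hg2 : ∀ x ∈ S, G.Adj x (g x) := fun x hx => (hgspec x hx).2
  have hSfin : S.Finite := Set.toFinite S
  set S' : Finset V := hSfin.toFinset with hS'
  set N : Finset V := G.neighborFinset s with hN
  have hncard : (G.neighborSet s).ncard = N.card := Set.ncard_eq_toFinset_card' _
  set E1 : Finset (Sym2 V) := (N.filter (fun y => y ∉ S)).image (fun y => s(s, y)) with hE1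
  set E2 : Finset (Sym2 V) := (S'.erase s).image (fun x => s(x, g x)) with hE2
  have hE1card : E1.card = (N.filter (fun y => y ∉ S)).card := by
    apply Finset.card_image_of_injOn
    intro y hy y' hy' hyy
    simp only [Finset.mem_coe, Finset.mem_filter] at hy hy'
    rcases Sym2.eq_iff.mp hyy with ⟨-, h⟩ | ⟨h1, h2⟩
    · exact h
    · exact absurd (h1 ▸ hs) hy'.2
  have hE2card : E2.card = (S'.erase s).card := by
    apply Finset.card_image_of_injOn
    intro x hx x' hx' hxx
    have hxS : x ∈ S := hSfin.mem_toFinset.mp (Finset.mem_of_mem_erase hx)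
    have hx'S : x' ∈ S := hSfin.mem_toFinset.mp (Finset.mem_of_mem_erase hx')
    rcases Sym2.eq_iff.mp hxx with ⟨h, -⟩ | ⟨h1, h2⟩
    · exact h
    · exact absurd (h1 ▸ hxS) (hg1 x' hx'S)
  have hE1sub : E1 ⊆ F := by
    intro e he
    simp only [hE1, Finset.mem_image, Finset.mem_filter] at he
    obtain ⟨y, ⟨hyN, hyS⟩, rfl⟩ := he
    exact hcut s hs y hyS ((G.mem_neighborFinset s y).mp hyN)
  have hE2sub : E2 ⊆ F := by
    intro e he
    simp only [hE2, Finset.mem_image] at he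
    obtain ⟨x, hx, rfl⟩ := he
    have hxS : x ∈ S := hSfin.mem_toFinset.mp (Finset.mem_of_mem_erase hx)
    exact hcut x hxS (g x) (hg1 x hxS) (hg2 x hxS)
  have hdisj : Disjoint E1 E2 := by
    rw [Finset.disjoint_left]
    intro e he1 he2
    simp only [hE1, hE2, Finset.mem_image, Finset.mem_filter] at he1 he2
    obtain ⟨y, ⟨hyN, hyS⟩, rfl⟩ := he1
    obtain ⟨x, hx, hxx⟩ := he2
    have hxs : x ≠ s := Finset.ne_of_mem_erase hx
    have hxS : x ∈ S := hSfin.mem_toFinset.mp (Finset.mem_of_mem_erase hx)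
    rcases Sym2.eq_iff.mp hxx with ⟨h1, -⟩ | ⟨h1, h2⟩
    · exact hxs h1
    · exact hyS (h1 ▸ hxS)
  have hNS : N.filter (fun y => y ∈ S) ⊆ S'.erase s := by
    intro y hy
    simp only [Finset.mem_filter] at hy
    have : G.Adj s y := (G.mem_neighborFinset s y).mp hy.1
    exact Finset.mem_erase.mpr ⟨this.ne', hSfin.mem_toFinset.mpr hy.2⟩
  have hsplit := Finset.card_filter_add_card_filter_not
    (s := N) (p := fun y => y ∈ S)
  calc (G.neighborSet s).ncard = N.card := hncard
    _ = (N.filter (fun y => y ∈ S)).card + (N.filter (fun y => y ∉ S)).card := by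
        rw [← hsplit]
    _ ≤ (S'.erase s).card + (N.filter (fun y => y ∉ S)).card := by
        exact Nat.add_le_add_right (Finset.card_le_card hNS) _
    _ = E2.card + E1.card := by rw [hE1card, hE2card]
    _ = (E1 ∪ E2).card := by rw [Finset.card_union_of_disjoint hdisj]; omega
    _ ≤ F.card := Finset.card_le_card (Finset.union_subset hE1sub hE2sub)

/-- Every connected `P₄`-free graph on at least 2 vertices has edge-connectivity equal to
its minimum degree. -/
theorem p4_free_edgeConn_eq_minDeg {V : Type*} [Fintype V] (G : SimpleGraph V)
    (hG : G.Connected) (hcard : 2 ≤ Fintype.card V)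
    (hfree : IsEmpty (pathGraph 4 ↪g G)) :
    edgeConn G = minDeg G := by
  classical
  haveI hne : Nonempty V := Fintype.card_pos_iff.mp (by omega)
  have hminmem : minDeg G ∈ {d | ∃ v : V, d = (G.neighborSet v).ncard} :=
    Nat.sInf_mem ⟨_, Classical.arbitrary V, rfl⟩
  obtain ⟨v₀, hv₀⟩ := hminmem
  have hminle : ∀ u : V, minDeg G ≤ (G.neighborSet u).ncard := fun u => Nat.sInf_le ⟨u, rfl⟩
  have hdeg : ∀ u : V, (G.neighborSet u).ncard = G.degree u := by
    intro u
    rw [← SimpleGraph.card_neighborFinset_eq_degree]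
    exact Set.ncard_eq_toFinset_card' _
  -- the incidence edges at v₀ form a disconnecting set
  have hE0 : minDeg G ∈
      {k | ∃ F : Finset (Sym2 V), ↑F ⊆ G.edgeSet ∧ F.card = k ∧
        ¬ (G.deleteEdges ↑F).Connected} := by
    refine ⟨G.incidenceFinset v₀, ?_, ?_, ?_⟩
    · intro e he
      simp only [Finset.coe_sort_coe, Finset.mem_coe, SimpleGraph.mem_incidenceFinset] at he
      exact he.1
    · rw [SimpleGraph.card_incidenceFinset_eq_degree, ← hdeg, hv₀]
    · intro hconn
      obtain ⟨u, hu⟩ := Fintype.exists_ne_of_one_lt_card (by omega) v₀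
      have hr := hconn.preconnected v₀ u
      obtain ⟨p⟩ := hr
      cases p with
      | nil => exact hu rfl
      | cons h q =>
        rw [SimpleGraph.deleteEdges_adj] at h
        refine h.2 ?_
        simp only [Finset.mem_coe, SimpleGraph.mem_incidenceFinset]
        exact ⟨(G.mem_edgeSet).mpr h.1, Sym2.mem_mk_left _ _⟩
  have hle : edgeConn G ≤ minDeg G := Nat.sInf_le hE0
  -- now the hard direction
  obtain ⟨F, hFsub, hFcard, hFnc⟩ :
      edgeConn G ∈ {k | ∃ F : Finset (Sym2 V), ↑F ⊆ G.edgeSet ∧ F.card = k ∧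
        ¬ (G.deleteEdges ↑F).Connected} := Nat.sInf_mem ⟨_, hE0⟩
  set G' := G.deleteEdges ↑F with hG'
  have hge : minDeg G ≤ F.card := by
    have hnp : ¬ G'.Preconnected := by
      intro hp
      exact hFnc ⟨hp⟩
    rw [SimpleGraph.Preconnected] at hnp
    push_neg at hnp
    obtain ⟨u, w, hnr⟩ := hnp
    set S : Set V := {x | G'.Reachable u x} with hS
    have huS : u ∈ S := SimpleGraph.Reachable.refl u
    have hwS : w ∉ S := hnr
    have hcut : ∀ x ∈ S, ∀ y, y ∉ S → G.Adj x y → s(x, y) ∈ F := by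
      intro x hx y hy hadj
      by_contra hmem
      exact hy (hx.trans (SimpleGraph.Adj.reachable
        (SimpleGraph.deleteEdges_adj.mpr ⟨hadj, hmem⟩)))
    by_cases h1 : ∀ x ∈ S, ∃ y, y ∉ S ∧ G.Adj x y
    · calc minDeg G ≤ (G.neighborSet u).ncard := hminle u
        _ ≤ F.card := count_aux G S F hcut h1 huS
    · by_cases h2 : ∀ x ∈ Sᶜ, ∃ y, y ∉ Sᶜ ∧ G.Adj x y
      · have hcut' : ∀ x ∈ Sᶜ, ∀ y, y ∉ Sᶜ → G.Adj x y → s(x, y) ∈ F := by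
          intro x hx y hy hadj
          rw [Sym2.eq_swap]
          exact hcut y (by simpa using hy) x hx hadj.symm
        calc minDeg G ≤ (G.neighborSet w).ncard := hminle w
          _ ≤ F.card := count_aux G Sᶜ F hcut' h2 hwS
      · push_neg at h1 h2
        obtain ⟨a, haS, hano⟩ := h1
        obtain ⟨b, hbT, hbno⟩ := h2
        have hbno' : ∀ y ∈ S, ¬ G.Adj b y := fun y hy => hbno y (by simpa using hy)
        exfalso
        have hr : G.Reachable a b := hG.preconnected a b
        obtain ⟨p, hp⟩ := hr.exists_walk_length_eq_dist
        cases p with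
        | nil => exact hbT haS
        | cons h q =>
          rename_i x
          cases q with
          | nil => exact hano b hbT h
          | cons h' q' =>
            rename_i y
            cases q' with
            | nil =>
              by_cases hxS : x ∈ S
              · exact hbno' x hxS h'.symm
              · exact hano x hxS h
            | cons h'' q'' =>
              have hdist : G.dist a b = q''.length + 3 := by
                rw [← hp]; simp only [SimpleGraph.Walk.length_cons]
              exact hfree.false (p4_aux G h h' h'' q'' hdist).some
  omega
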